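/- Let V be a finite-dimensional real vector space and write a closed convex cone C as C = C₀ + ℝ₊v₁ + ⋯ + ℝ₊vₘ, where C₀ is a closed convex cone and v₁,…,vₘ ∈ V. If R = ℝ₊w is an extremal ray of C with w not proportional to any vᵢ, then R ⊆ C₀ and R is an extremal ray of C₀. -/

import Mathlib

/-- `v` spans an extremal ray of the cone `C`. -/
def IsExtremalVec {V : Type*} [AddCommGroup V] [Module ℝ V] (C : Set V) (v : V) : Prop :=
  v ∈ C ∧ v ≠ 0 ∧ ∀ x ∈ C, ∀ y ∈ C, (∃ c : ℝ, 0 ≤ c ∧ x + y = c • v) →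
    (∃ a : ℝ, 0 ≤ a ∧ x = a • v) ∧ (∃ b : ℝ, 0 ≤ b ∧ y = b • v)

/-- If a closed convex cone decomposes as
`C = C₀ + ℝ₊v₁ + ⋯ + ℝ₊vₘ` with `C₀` a closed convex cone, and `ℝ₊w` is an
extremal ray of `C` with `w` not proportional to any `vᵢ`, then `w ∈ C₀`
(so the ray lies in `C₀`) and `w` spans an extremal ray of `C₀`. -/
theorem stmt_10 {V : Type*} [NormedAddCommGroup V] [NormedSpace ℝ V]
    [FiniteDimensional ℝ V] (C C₀ : Set V) {m : ℕ} (v : Fin m → V) (w : V)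
    (hC₀closed : IsClosed C₀) (hC₀zero : (0 : V) ∈ C₀)
    (hC₀add : ∀ x ∈ C₀, ∀ y ∈ C₀, x + y ∈ C₀)
    (hC₀smul : ∀ (c : ℝ), 0 ≤ c → ∀ x ∈ C₀, c • x ∈ C₀)
    (hC : C = {x : V | ∃ c₀ ∈ C₀, ∃ t : Fin m → ℝ,
        (∀ i, 0 ≤ t i) ∧ x = c₀ + ∑ i, t i • v i})
    (hext : IsExtremalVec C w)
    (hnotprop : ∀ i, ∀ c : ℝ, w ≠ c • v i) :
    w ∈ C₀ ∧ IsExtremalVec C₀ w := by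
  obtain ⟨hwC, hw0, hwext⟩ := hext
  have hsub : C₀ ⊆ C := by
    intro x hx
    rw [hC]
    exact ⟨x, hx, fun _ => 0, fun i => le_refl 0, by simp⟩
  have hvmem : ∀ (t : Fin m → ℝ), (∀ i, 0 ≤ t i) → (∑ i, t i • v i) ∈ C := by
    intro t ht
    rw [hC]
    exact ⟨0, hC₀zero, t, ht, by simp⟩
  -- Key claim: any nonneg combination of the vᵢ that is a nonneg multiple of w is 0.
  have hclaim : ∀ (t : Fin m → ℝ), (∀ i, 0 ≤ t i) →
      (∃ b : ℝ, 0 ≤ b ∧ (∑ i, t i • v i) = b • w) → (∑ i, t i • v i) = 0 := by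
    rintro t ht ⟨b, hb, hbw⟩
    have heach : ∀ i, t i • v i = 0 := by
      intro i
      have hx : (t i • v i) ∈ C := by
        have h := hvmem (fun j => if j = i then t j else 0)
          (fun j => by split <;> [exact ht j; exact le_refl 0])
        simpa [ite_smul] using h
      have hy : (∑ j ∈ Finset.univ.erase i, t j • v j) ∈ C := by
        have h := hvmem (fun j => if j = i then 0 else t j)
          (fun j => by split <;> [exact le_refl 0; exact ht j])
        have heq : (∑ j, (if j = i then 0 else t j) • v j)
            = ∑ j ∈ Finset.univ.erase i, t j • v j := by
          rw [← Finset.sum_erase_add _ (fun j => (if j = i then 0 else t j) • v j)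
            (Finset.mem_univ i), if_pos rfl, zero_smul, add_zero]
          exact Finset.sum_congr rfl (fun j hj => by
            rw [if_neg (Finset.ne_of_mem_erase hj)])
        rwa [heq] at h
      have hsum : t i • v i + ∑ j ∈ Finset.univ.erase i, t j • v j = b • w := by
        exact (Finset.add_sum_erase _ (fun j => t j • v j) (Finset.mem_univ i)).trans hbw
      obtain ⟨⟨a, ha, hxa⟩, -⟩ := hwext _ hx _ hy ⟨b, hb, hsum⟩
      rcases eq_or_lt_of_le ha with h0 | hpos
      · rw [hxa, ← h0, zero_smul]
      · exfalso
        apply hnotprop i (a⁻¹ * t i)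
        rw [mul_smul, hxa, smul_smul, inv_mul_cancel₀ (ne_of_gt hpos), one_smul]
    calc (∑ i, t i • v i) = ∑ i, (0 : V) := Finset.sum_congr rfl (fun i _ => heach i)
      _ = 0 := Finset.sum_const_zero
  -- Now decompose w itself.
  have hwC' := hwC
  rw [hC] at hwC'
  obtain ⟨c₀, hc₀, t, ht, hw⟩ := hwC'
  obtain ⟨-, b, hb, hy⟩ := hwext c₀ (hsub hc₀) _ (hvmem t ht)
    ⟨1, zero_le_one, by rw [one_smul]; exact hw.symm⟩
  have hz : (∑ i, t i • v i) = 0 := hclaim t ht ⟨b, hb, hy⟩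
  have hwc₀ : w = c₀ := by rw [hw, hz, add_zero]
  refine ⟨hwc₀ ▸ hc₀, hwc₀ ▸ hc₀, hw0, ?_⟩
  intro x hx y hy h
  exact hwext x (hsub hx) y (hsub hy) h
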